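/- Let ω be a real analytic 1-form on a neighborhood of 0 ∈ ℝⁿ and ω_ℂ its complexification on a neighborhood of 0 ∈ ℂⁿ. If there is a holomorphic function F on a neighborhood of 0 ∈ ℂⁿ, nonconstant, with dF ∧ ω_ℂ = 0 (F is a holomorphic first integral of ω_ℂ), then there exists a nonconstant real analytic function h on a neighborhood of 0 ∈ ℝⁿ with dh ∧ ω = 0, i.e., the real foliation defined by ω admits a real analytic first integral. -/

import Mathlib

open Filter
open Metric

/-- A holomorphic function near `0 ∈ ℂⁿ` vanishing on real points near `0` vanishes
near `0`. -/
private lemma key_vanish (n : ℕ) (F : (Fin n → ℂ) → ℂ) (hF : AnalyticAt ℂ F 0)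
    (h0 : ∀ᶠ x in nhds (0 : Fin n → ℝ), F (fun j => (x j : ℂ)) = 0) :
    ∀ᶠ z in nhds (0 : Fin n → ℂ), F z = 0 := by
  obtain ⟨ε, εpos, hε⟩ : ∃ ε > 0, ∀ y ∈ ball (0 : Fin n → ℂ) ε, AnalyticAt ℂ F y := by
    have := hF.eventually_analyticAt
    rw [Metric.eventually_nhds_iff_ball] at this
    exact this
  obtain ⟨δ, δpos, hδ⟩ : ∃ δ > 0, ∀ x ∈ ball (0 : Fin n → ℝ) δ,
      F (fun j => (x j : ℂ)) = 0 := by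
    rw [Metric.eventually_nhds_iff_ball] at h0
    exact h0
  set ρ : ℝ := min ε δ / 8 with hρ
  have ρpos : 0 < ρ := by positivity
  rw [Metric.eventually_nhds_iff_ball]
  refine ⟨ρ, ρpos, fun z hz => ?_⟩
  rw [mem_ball_zero_iff] at hz
  set x : Fin n → ℝ := fun j => (z j).re with hx
  set y : Fin n → ℝ := fun j => (z j).im with hy
  have hxn : ‖x‖ ≤ ‖z‖ := by
    refine (pi_norm_le_iff_of_nonneg (norm_nonneg z)).2 fun j => ?_
    calc ‖x j‖ = |(z j).re| := rfl
      _ ≤ ‖z j‖ := Complex.abs_re_le_norm _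
      _ ≤ ‖z‖ := norm_le_pi_norm z j
  have hyn : ‖y‖ ≤ ‖z‖ := by
    refine (pi_norm_le_iff_of_nonneg (norm_nonneg z)).2 fun j => ?_
    calc ‖y j‖ = |(z j).im| := rfl
      _ ≤ ‖z j‖ := Complex.abs_im_le_norm _
      _ ≤ ‖z‖ := norm_le_pi_norm z j
  have hιn : ∀ v : Fin n → ℝ, ‖(fun j => (v j : ℂ))‖ ≤ ‖v‖ := by
    intro v
    refine (pi_norm_le_iff_of_nonneg (norm_nonneg v)).2 fun j => ?_
    rw [show ‖((v j : ℝ) : ℂ)‖ = |v j| from Complex.norm_real _]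
    exact norm_le_pi_norm v j
  set c : Fin n → ℂ := fun j => (x j : ℂ) with hc
  set d : Fin n → ℂ := fun j => (y j : ℂ) with hd
  set g : ℂ → ℂ := fun t => F (c + t • d) with hg
  -- g is analytic on ball 0 3
  have hganal : AnalyticOnNhd ℂ g (ball (0 : ℂ) 3) := by
    intro t ht
    rw [mem_ball_zero_iff] at ht
    have harg : c + t • d ∈ ball (0 : Fin n → ℂ) ε := by
      rw [mem_ball_zero_iff]
      calc ‖c + t • d‖ ≤ ‖c‖ + ‖t • d‖ := norm_add_le _ _
        _ ≤ ‖x‖ + ‖t‖ * ‖d‖ := by rw [norm_smul]; gcongr; exact hιn x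
        _ ≤ ρ + 3 * ρ := by
            gcongr
            · exact hxn.trans hz.le
            · exact (hιn y).trans (hyn.trans hz.le)
        _ < ε := by
            have : min ε δ ≤ ε := min_le_left _ _
            rw [hρ]; linarith
    have hin : AnalyticAt ℂ (fun t : ℂ => c + t • d) t := by
      apply analyticAt_const.add
      exact analyticAt_id.smul analyticAt_const
    exact (AnalyticAt.comp (g := F) (f := fun t : ℂ => c + t • d) (hε _ harg) hin :
      AnalyticAt ℂ (F ∘ fun t : ℂ => c + t • d) t)
  -- g vanishes on small positive reals
  have hreal : ∀ s : ℝ, |s| ≤ 1 → g s = 0 := by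
    intro s hs
    have harg : ((s : ℂ)) • d + c = fun j => ((x j + s * y j : ℝ) : ℂ) := by
      funext j
      simp only [Pi.add_apply, Pi.smul_apply, smul_eq_mul, hc, hd]
      push_cast
      try ring
    have hmem : (fun j => x j + s * y j) ∈ ball (0 : Fin n → ℝ) δ := by
      rw [mem_ball_zero_iff]
      calc ‖(fun j => x j + s * y j : Fin n → ℝ)‖ = ‖x + s • y‖ := by
            rfl
        _ ≤ ‖x‖ + ‖s • y‖ := norm_add_le _ _
        _ ≤ ρ + 1 * ρ := by
            rw [norm_smul]
            gcongr
            · exact hxn.trans hz.le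
            · simpa using hs
            · exact hyn.trans hz.le
        _ < δ := by
            have : min ε δ ≤ δ := min_le_right _ _
            rw [hρ]; linarith
    have := hδ _ hmem
    rw [hg]
    show F (c + (s : ℂ) • d) = 0
    rw [show c + (s : ℂ) • d = (s : ℂ) • d + c by ring, harg]
    exact this
  -- frequently zero near 0
  have hfreq : ∃ᶠ t in nhdsWithin (0 : ℂ) {(0 : ℂ)}ᶜ, g t = 0 := by
    have htend : Tendsto (fun k : ℕ => ((1 / (k + 1) : ℝ) : ℂ)) atTop
        (nhdsWithin (0 : ℂ) {(0 : ℂ)}ᶜ) := by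
      apply tendsto_nhdsWithin_of_tendsto_nhds_of_eventually_within
      · have : Tendsto (fun k : ℕ => (1 / (k + 1) : ℝ)) atTop (nhds 0) :=
          tendsto_one_div_add_atTop_nhds_zero_nat
        have h2 := (Complex.continuous_ofReal.tendsto 0).comp this
        simpa [Function.comp_def] using h2
      · filter_upwards with k
        simp only [Set.mem_compl_iff, Set.mem_singleton_iff]
        intro hk
        have : (1 / (k + 1) : ℝ) = 0 := by exact_mod_cast hk
        have : (0 : ℝ) < 1 / (k + 1) := by positivity
        linarith
    apply htend.frequently
    apply Frequently.of_forall
    intro k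
    apply hreal
    rw [abs_of_pos (by positivity)]
    rw [div_le_one (by positivity)]
    linarith
  -- identity theorem
  have hEq : Set.EqOn g 0 (ball (0 : ℂ) 3) :=
    hganal.eqOn_zero_of_preconnected_of_frequently_eq_zero
      (convex_ball _ _).isPreconnected (mem_ball_self (by norm_num)) hfreq
  have hI : g Complex.I = 0 := hEq (by simp [mem_ball_zero_iff])
  have : c + Complex.I • d = z := by
    funext j
    simp only [Pi.add_apply, Pi.smul_apply, hc, hd, smul_eq_mul]
    rw [mul_comm]
    exact Complex.re_add_im (z j)
  have hI' : F (c + Complex.I • d) = 0 := hI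
  rwa [this] at hI'

private noncomputable def iotaCLM (n : ℕ) : (Fin n → ℝ) →L[ℝ] (Fin n → ℂ) :=
  ContinuousLinearMap.pi fun j => Complex.ofRealCLM.comp (ContinuousLinearMap.proj j)

private lemma iotaCLM_apply (n : ℕ) (x : Fin n → ℝ) :
    iotaCLM n x = fun j => (x j : ℂ) := rfl


/-- Lemma 3.1: let `ω = Σ aⱼ dxⱼ` be a real analytic 1-form near `0 ∈ ℝⁿ`,
with complexification `ω_ℂ = Σ (aℂ)ⱼ dzⱼ` near `0 ∈ ℂⁿ` (the `(aℂ)ⱼ` are the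
holomorphic extensions of the `aⱼ`). If `ω_ℂ` admits a nonconstant holomorphic
first integral `F` (i.e. `dF ∧ ω_ℂ = 0` near `0`), then `ω` admits a
nonconstant real analytic first integral `h` near `0 ∈ ℝⁿ`
(i.e. `dh ∧ ω = 0` near `0`). -/
theorem real_first_integral_of_complexified_first_integral
    (n : ℕ)
    (a : (Fin n → ℝ) → (Fin n → ℝ)) (aC : (Fin n → ℂ) → (Fin n → ℂ))
    (ha : AnalyticAt ℝ a 0) (haC : AnalyticAt ℂ aC 0)
    -- `aC` is the complexification of `a`:
    (hcompat : ∀ᶠ x in nhds (0 : Fin n → ℝ),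
      aC (fun j => (x j : ℂ)) = fun j => ((a x j : ℝ) : ℂ))
    (F : (Fin n → ℂ) → ℂ) (hF : AnalyticAt ℂ F 0)
    (hFnc : ¬ (F =ᶠ[nhds (0 : Fin n → ℂ)] fun _ => F 0))
    -- `dF ∧ ω_ℂ = 0` near `0 ∈ ℂⁿ`:
    (hFint : ∀ᶠ z in nhds (0 : Fin n → ℂ), ∀ v w : Fin n → ℂ,
      (fderiv ℂ F z v) * (∑ j, aC z j * w j) =
      (fderiv ℂ F z w) * (∑ j, aC z j * v j)) :
    ∃ h : (Fin n → ℝ) → ℝ, AnalyticAt ℝ h 0 ∧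
      ¬ (h =ᶠ[nhds (0 : Fin n → ℝ)] fun _ => h 0) ∧
      ∀ᶠ x in nhds (0 : Fin n → ℝ), ∀ v w : Fin n → ℝ,
        (fderiv ℝ h x v) * (∑ j, a x j * w j) =
        (fderiv ℝ h x w) * (∑ j, a x j * v j) := by
  set ι : (Fin n → ℝ) →L[ℝ] (Fin n → ℂ) := iotaCLM n with hιdef
  have hι0 : ι 0 = 0 := map_zero ι
  set G : (Fin n → ℝ) → ℂ := fun x => F (ι x) with hGdef
  -- pull back eventual facts along ι
  have hpull : ∀ {p : (Fin n → ℂ) → Prop}, (∀ᶠ z in nhds (0 : Fin n → ℂ), p z) →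
      ∀ᶠ x in nhds (0 : Fin n → ℝ), p (ι x) := by
    intro p hp
    have := ι.continuous.tendsto 0
    rw [hι0] at this
    exact this.eventually hp
  -- For any real-linear functional φ on ℂ, φ ∘ G is analytic and a first integral
  have main : ∀ φ : ℂ →L[ℝ] ℝ,
      AnalyticAt ℝ (fun x => φ (G x)) 0 ∧
      ∀ᶠ x in nhds (0 : Fin n → ℝ), ∀ v w : Fin n → ℝ,
        (fderiv ℝ (fun x => φ (G x)) x v) * (∑ j, a x j * w j) =
        (fderiv ℝ (fun x => φ (G x)) x w) * (∑ j, a x j * v j) := by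
    intro φ
    constructor
    · have h1 : AnalyticAt ℝ F (ι 0) := by rw [hι0]; exact hF.restrictScalars
      have h2 : AnalyticAt ℝ (F ∘ ι) 0 := h1.comp (ι.analyticAt 0)
      exact (φ.analyticAt _).comp h2
    · filter_upwards [hcompat, hpull hFint, hpull hF.eventually_analyticAt]
        with x h1 h2 h3 v w
      -- compute the derivative of φ ∘ G
      have hdF : HasFDerivAt F (fderiv ℂ F (ι x)) (ι x) :=
        h3.differentiableAt.hasFDerivAt
      have hdG : HasFDerivAt G (((fderiv ℂ F (ι x)).restrictScalars ℝ).comp ι) x :=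
        (hdF.restrictScalars ℝ).comp x ι.hasFDerivAt
      have hdh : HasFDerivAt (fun x => φ (G x))
          (φ.comp (((fderiv ℂ F (ι x)).restrictScalars ℝ).comp ι)) x :=
        φ.hasFDerivAt.comp x hdG
      have hfd : ∀ v : Fin n → ℝ, fderiv ℝ (fun x => φ (G x)) x v =
          φ (fderiv ℂ F (ι x) (ι v)) := by
        intro v
        rw [hdh.fderiv]
        rfl
      -- the complexified first-integral identity at ι x, ι v, ι w
      have h2' := h2 (ι v) (ι w)
      have hsum : ∀ u : Fin n → ℝ, (∑ j, aC (ι x) j * (ι u) j) =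
          ((∑ j, a x j * u j : ℝ) : ℂ) := by
        intro u
        have : aC (ι x) = fun j => ((a x j : ℝ) : ℂ) := h1
        rw [this]
        push_cast
        rfl
      rw [hsum v, hsum w] at h2'
      have key : ∀ (A : ℂ) (s : ℝ), φ A * s = φ (A * (s : ℂ)) := by
        intro A s
        rw [show A * (s : ℂ) = s • A by rw [Complex.real_smul]; ring, map_smul]
        simp [mul_comm]
      rw [hfd v, hfd w, key _ _, key _ _, h2']
  obtain ⟨hre_an, hre_int⟩ := main Complex.reCLM
  obtain ⟨him_an, him_int⟩ := main Complex.imCLM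
  by_cases hre : (fun x => (G x).re) =ᶠ[nhds (0 : Fin n → ℝ)] fun _ => (G 0).re
  · by_cases him : (fun x => (G x).im) =ᶠ[nhds (0 : Fin n → ℝ)] fun _ => (G 0).im
    · -- both constant: G eventually constant, so F eventually constant, contradiction
      exfalso
      apply hFnc
      have hGconst : ∀ᶠ x in nhds (0 : Fin n → ℝ), F (fun j => (x j : ℂ)) - F 0 = 0 := by
        filter_upwards [hre, him] with x h1 h2
        have : G x = G 0 := Complex.ext h1 h2
        have hG0 : G 0 = F 0 := by rw [hGdef]; simp [hι0]
        have h4 : F (fun j => ((x j : ℝ) : ℂ)) = F 0 := hG0 ▸ this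
        rw [h4, sub_self]
      have := key_vanish n (fun z => F z - F 0) (hF.sub analyticAt_const) hGconst
      filter_upwards [this] with z hz
      simpa using sub_eq_zero.mp hz
    · exact ⟨fun x => (G x).im, him_an, by simpa using him, him_int⟩
  · exact ⟨fun x => (G x).re, hre_an, by simpa using hre, hre_int⟩
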